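/- Let m ≥ 2 and consider Π with two homomorphisms h_1(a) = h_2(a) = a^m and axiom a^m, so L_+(Π) = {m^{k} : k ≥ 3} ∪ {m^{1+i+j} : i,j ≥ 1} = {m^k : k ≥ 3}. Then: (1) L_+(Π) = {m^k : k ≥ 3}; (2) the unique single-homomorphism unary P system Π' = ({a}, h, a^{w'}) with L_+(Π') = {m^k : k ≥ 3} has h(a) = a^m and w' = m^2, hence size |Π'| = m + m^2 while |Π| = 3m; so |Π'| ≥ |Π|^2/9. -/

import Mathlib

/-- Quadratic lower bound witness: for Π with c₁ = c₂ = w = m (m ≥ 2),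
L_+(Π) = {m^k : k ≥ 3}, and any equivalent one-homomorphism system must have
multiplier m and axiom m², hence size m + m² ≥ |Π|²/9 with |Π| = 3m. -/
theorem stmt_12 (m : ℕ) (hm : 2 ≤ m) :
    ({x : ℕ | ∃ i j : ℕ, 1 ≤ i ∧ 1 ≤ j ∧ x = m ^ (1 + i + j)} =
     {x : ℕ | ∃ k : ℕ, 3 ≤ k ∧ x = m ^ k}) ∧
    (∀ c w' : ℕ, 1 ≤ c → 1 ≤ w' →
      {x : ℕ | ∃ k : ℕ, 1 ≤ k ∧ x = c ^ k * w'} =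
        {x : ℕ | ∃ k : ℕ, 3 ≤ k ∧ x = m ^ k} →
      c = m ∧ w' = m ^ 2 ∧ c + w' = m + m ^ 2 ∧ (3 * m) ^ 2 ≤ 9 * (c + w')) := by
  have hm1 : 1 ≤ m := le_trans (by norm_num) hm
  constructor
  · ext x
    simp only [Set.mem_setOf_eq]
    constructor
    · rintro ⟨i, j, hi, hj, rfl⟩
      exact ⟨1 + i + j, by omega, rfl⟩
    · rintro ⟨k, hk, rfl⟩
      exact ⟨1, k - 2, le_refl 1, by omega, by rw [show 1 + 1 + (k - 2) = k by omega]⟩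
  · intro c w' hc hw' hE
    -- c ≥ 2
    have hmono : StrictMono (fun k => m ^ k) := fun a b h => Nat.pow_lt_pow_right hm h
    have hc2 : 2 ≤ c := by
      by_contra h
      have hc1 : c = 1 := by omega
      have h3 : m ^ 3 ∈ {x : ℕ | ∃ k : ℕ, 1 ≤ k ∧ x = c ^ k * w'} := by
        rw [hE]; exact ⟨3, le_refl 3, rfl⟩
      have h4 : m ^ 4 ∈ {x : ℕ | ∃ k : ℕ, 1 ≤ k ∧ x = c ^ k * w'} := by
        rw [hE]; exact ⟨4, by norm_num, rfl⟩
      obtain ⟨k, _, hk3⟩ := h3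
      obtain ⟨l, _, hl4⟩ := h4
      rw [hc1, one_pow, one_mul] at hk3 hl4
      have : m ^ 3 < m ^ 4 := hmono (by norm_num)
      omega
    -- c * w' = m ^ 3
    have hmem1 : c * w' ∈ {x : ℕ | ∃ k : ℕ, 3 ≤ k ∧ x = m ^ k} := by
      rw [← hE]; exact ⟨1, le_refl 1, by rw [pow_one]⟩
    obtain ⟨j, hj3, hj⟩ := hmem1
    have hmem2 : m ^ 3 ∈ {x : ℕ | ∃ k : ℕ, 1 ≤ k ∧ x = c ^ k * w'} := by
      rw [hE]; exact ⟨3, le_refl 3, rfl⟩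
    obtain ⟨k, hk1, hk⟩ := hmem2
    have hle1 : c * w' ≤ c ^ k * w' :=
      Nat.mul_le_mul_right w' (le_trans (by rw [pow_one]) (Nat.pow_le_pow_right hc hk1))
    have hge1 : m ^ 3 ≤ c * w' := by
      rw [hj]; exact Nat.pow_le_pow_right hm1 hj3
    have hcw3 : c * w' = m ^ 3 := le_antisymm (by rw [← hk] at hle1; omega) hge1
    -- c ^ 2 * w' = m ^ 4
    have hmem3 : c ^ 2 * w' ∈ {x : ℕ | ∃ k : ℕ, 3 ≤ k ∧ x = m ^ k} := by
      rw [← hE]; exact ⟨2, by norm_num, rfl⟩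
    obtain ⟨j2, hj23, hj2⟩ := hmem3
    have hgt : m ^ 3 < c ^ 2 * w' := by
      rw [← hcw3]
      have h2 : c < c ^ 2 := by nlinarith
      nlinarith [hw']
    have hj24 : 4 ≤ j2 := by
      by_contra h
      have : j2 = 3 := by omega
      rw [this] at hj2; omega
    have hge2 : m ^ 4 ≤ c ^ 2 * w' := by
      rw [hj2]; exact Nat.pow_le_pow_right hm1 hj24
    have hmem4 : m ^ 4 ∈ {x : ℕ | ∃ k : ℕ, 1 ≤ k ∧ x = c ^ k * w'} := by
      rw [hE]; exact ⟨4, by norm_num, rfl⟩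
    obtain ⟨l, hl1, hl⟩ := hmem4
    have hl2 : 2 ≤ l := by
      by_contra h
      have : l = 1 := by omega
      rw [this, pow_one] at hl
      rw [hcw3] at hl
      have : m ^ 3 < m ^ 4 := hmono (by norm_num)
      omega
    have hle2 : c ^ 2 * w' ≤ c ^ l * w' :=
      Nat.mul_le_mul_right w' (Nat.pow_le_pow_right (by omega) hl2)
    have hc2w4 : c ^ 2 * w' = m ^ 4 := le_antisymm (by rw [← hl] at hle2; omega) hge2
    -- conclude c = m
    have hcm : c = m := by
      have h1 : c * (c * w') = m ^ 4 := by rw [← hc2w4]; ring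
      rw [hcw3] at h1
      have h2 : m * m ^ 3 = m ^ 4 := by ring
      have hpos : 0 < m ^ 3 := Nat.pow_pos (by omega)
      exact Nat.eq_of_mul_eq_mul_right hpos (by omega)
    have hwm : w' = m ^ 2 := by
      have h1 : m * w' = m * m ^ 2 := by
        rw [← hcm] at hcw3 ⊢
        rw [hcw3]; subst hcm; ring
      exact Nat.eq_of_mul_eq_mul_left (by omega) h1
    refine ⟨hcm, hwm, by rw [hcm, hwm], ?_⟩
    rw [hcm, hwm]; nlinarith
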